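/- The local sensitivity of the population variance at a dataset x of n reals in [L,U] is at most (2(U−L)·max_i|x_i − μ| + (U−L)²·(n−1)/n)/n, where μ is the mean of x; consequently the global sensitivity of variance on [L,U]-bounded datasets of size n is at most (U−L)²·(3n−1)/n². -/

import Mathlib

/-- Population variance of `n` reals. -/
noncomputable def pvar {n : ℕ} (x : Fin n → ℝ) : ℝ :=
  (∑ i, x i ^ 2) / n - ((∑ i, x i) / n) ^ 2

/-- Local sensitivity of the population variance at `x`, over neighbors in [L,U]. -/
noncomputable def varLS {n : ℕ} (L U : ℝ) (x : Fin n → ℝ) : ℝ :=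
  sSup {r : ℝ | ∃ y : Fin n → ℝ, (∀ i, y i ∈ Set.Icc L U) ∧ hammingDist x y = 1 ∧
    r = |pvar x - pvar y|}

/-- Global sensitivity of the population variance on [L,U]-bounded datasets. -/
noncomputable def varGS (n : ℕ) (L U : ℝ) : ℝ :=
  sSup {r : ℝ | ∃ x y : Fin n → ℝ, (∀ i, x i ∈ Set.Icc L U) ∧ (∀ i, y i ∈ Set.Icc L U) ∧
    hammingDist x y = 1 ∧ r = |pvar x - pvar y|}

lemma abs_sub_le'' {a b L U : ℝ} (h1 : L ≤ a) (h2 : a ≤ U) (h3 : L ≤ b) (h4 : b ≤ U) :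
    |a - b| ≤ U - L := abs_sub_le_iff.mpr ⟨by linarith, by linarith⟩

lemma key_bound {n : ℕ} (hn : 0 < n) (L U : ℝ) (hLU : L ≤ U)
    (x y : Fin n → ℝ) (hx : ∀ i, x i ∈ Set.Icc L U) (hy : ∀ i, y i ∈ Set.Icc L U)
    (hd : hammingDist x y = 1) :
    |pvar x - pvar y| ≤
      (2 * (U - L) * (⨆ i : Fin n, |x i - (∑ j, x j) / n|) +
        (U - L) ^ 2 * ((n : ℝ) - 1) / n) / n := by
  have hnR : (0:ℝ) < n := by exact_mod_cast hn
  have hnne : (n:ℝ) ≠ 0 := ne_of_gt hnR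
  have hn1 : (1:ℝ) ≤ n := by exact_mod_cast hn
  -- extract the differing coordinate
  unfold hammingDist at hd
  obtain ⟨k, hk⟩ := Finset.card_eq_one.mp hd
  have hkne : x k ≠ y k := by
    have : k ∈ Finset.univ.filter fun i => x i ≠ y i := by rw [hk]; simp
    exact (Finset.mem_filter.mp this).2
  have heq : ∀ i, i ≠ k → x i = y i := by
    intro i hik
    by_contra h
    have : i ∈ Finset.univ.filter fun j => x j ≠ y j := by
      simp [h]
    rw [hk] at this
    exact hik (Finset.mem_singleton.mp this)
  set a := x k with ha
  set b := y k with hb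
  set S := ∑ j, x j with hS
  set μ := S / n with hμ
  set M := ⨆ i : Fin n, |x i - μ| with hM
  -- sum relations
  have hsum : ∑ j, y j = S + (b - a) := by
    have : ∑ j, (y j - x j) = b - a := by
      rw [Finset.sum_eq_single k]
      · intro i _ hik; rw [heq i hik]; ring
      · intro h; exact absurd (Finset.mem_univ k) h
    have h2 : ∑ j, (y j - x j) = (∑ j, y j) - S := by
      rw [Finset.sum_sub_distrib]
    linarith [this, h2.symm.trans this]
  have hsq : ∑ j, y j ^ 2 = (∑ j, x j ^ 2) + (b ^ 2 - a ^ 2) := by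
    have : ∑ j, (y j ^ 2 - x j ^ 2) = b ^ 2 - a ^ 2 := by
      rw [Finset.sum_eq_single k]
      · intro i _ hik; rw [heq i hik]; ring
      · intro h; exact absurd (Finset.mem_univ k) h
    have h2 : ∑ j, (y j ^ 2 - x j ^ 2) = (∑ j, y j ^ 2) - ∑ j, x j ^ 2 := by
      rw [Finset.sum_sub_distrib]
    linarith [h2.symm.trans this]
  -- mean in range
  have hμL : L ≤ μ := by
    have : (n : ℝ) * L ≤ S := by
      have := Finset.sum_le_sum (fun i (_ : i ∈ Finset.univ) => (hx i).1)
      simpa [hS, mul_comm] using this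
    rw [hμ]; rw [le_div_iff₀ hnR]; linarith
  have hμU : μ ≤ U := by
    have : S ≤ (n : ℝ) * U := by
      have := Finset.sum_le_sum (fun i (_ : i ∈ Finset.univ) => (hx i).2)
      simpa [hS, mul_comm] using this
    rw [hμ]; rw [div_le_iff₀ hnR]; linarith
  have haM : |a - μ| ≤ M := by
    apply le_ciSup (f := fun i => |x i - μ|) (Set.Finite.bddAbove (Set.finite_range _)) k
  have hM0 : (0:ℝ) ≤ M := le_trans (abs_nonneg _) haM
  -- value formula
  have hΔ : pvar x - pvar y =
      ((a - b) / n) * ((a - μ) * (1 + 1/n) + (b - μ) * (1 - 1/n)) := by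
    unfold pvar
    rw [hsum, hsq, hμ]
    field_simp
    ring
  have h1 : |a - b| ≤ U - L := abs_sub_le'' (hx k).1 (hx k).2 (hy k).1 (hy k).2
  have h2 : |b - μ| ≤ U - L := abs_sub_le'' (hy k).1 (hy k).2 hμL hμU
  have hinner : |(a - μ) * (1 + 1/n) + (b - μ) * (1 - 1/n)| ≤
      2 * M + (U - L) * (((n:ℝ) - 1) / n) := by
    calc |(a - μ) * (1 + 1/n) + (b - μ) * (1 - 1/n)|
        ≤ |(a - μ) * (1 + 1/n)| + |(b - μ) * (1 - 1/n)| := abs_add_le _ _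
      _ = |a - μ| * (1 + 1/n) + |b - μ| * (1 - 1/n) := by
          rw [abs_mul, abs_mul, abs_of_nonneg (by positivity : (0:ℝ) ≤ 1 + 1/n),
            abs_of_nonneg (by rw [sub_nonneg]; rw [div_le_iff₀ hnR]; linarith : (0:ℝ) ≤ 1 - 1/n)]
      _ ≤ 2 * M + (U - L) * (((n:ℝ) - 1) / n) := by
          have e1 : |a - μ| * (1 + 1/n) ≤ M * 2 := by
            have h1n : 1/(n:ℝ) ≤ 1 := by rw [div_le_one hnR]; exact hn1
            apply mul_le_mul haM (by linarith) (by positivity) hM0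
          have e2 : |b - μ| * (1 - 1/n) ≤ (U - L) * (((n:ℝ) - 1) / n) := by
            have : (1 : ℝ) - 1/n = ((n:ℝ) - 1)/n := by field_simp
            rw [this]
            apply mul_le_mul_of_nonneg_right h2
            apply div_nonneg (by linarith) (le_of_lt hnR)
          linarith
  calc |pvar x - pvar y| = |a - b| / n * |(a - μ) * (1 + 1/n) + (b - μ) * (1 - 1/n)| := by
        rw [hΔ, abs_mul, abs_div, abs_of_nonneg (le_of_lt hnR)]
    _ ≤ (U - L) / n * (2 * M + (U - L) * (((n:ℝ) - 1) / n)) := by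
        apply mul_le_mul (by gcongr) hinner (abs_nonneg _)
          (div_nonneg (by linarith) hnR.le)
    _ = (2 * (U - L) * M + (U - L) ^ 2 * ((n : ℝ) - 1) / n) / n := by
        field_simp

theorem variance_sensitivity_bounds {n : ℕ} (hn : 0 < n) (L U : ℝ) (hLU : L ≤ U) :
    (∀ x : Fin n → ℝ, (∀ i, x i ∈ Set.Icc L U) →
      varLS L U x ≤
        (2 * (U - L) * (⨆ i : Fin n, |x i - (∑ j, x j) / n|) +
          (U - L) ^ 2 * ((n : ℝ) - 1) / n) / n) ∧
    varGS n L U ≤ (U - L) ^ 2 * (3 * (n : ℝ) - 1) / (n : ℝ) ^ 2 := by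
  have hnR : (0:ℝ) < n := by exact_mod_cast hn
  have hn1 : (1:ℝ) ≤ n := by exact_mod_cast hn
  constructor
  · intro x hx
    set μ := (∑ j, x j) / n with hμ
    have hM0 : (0:ℝ) ≤ ⨆ i : Fin n, |x i - μ| := by
      obtain ⟨k⟩ : Nonempty (Fin n) := ⟨⟨0, hn⟩⟩
      exact le_trans (abs_nonneg _)
        (le_ciSup (f := fun i => |x i - μ|) (Set.Finite.bddAbove (Set.finite_range _)) k)
    apply Real.sSup_le
    · rintro r ⟨y, hy, hd, rfl⟩
      exact key_bound hn L U hLU x y hx hy hd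
    · exact div_nonneg (add_nonneg (mul_nonneg (by linarith) hM0)
        (div_nonneg (mul_nonneg (sq_nonneg _) (by linarith)) hnR.le)) hnR.le
  · apply Real.sSup_le
    · rintro r ⟨x, y, hx, hy, hd, rfl⟩
      set μ := (∑ j, x j) / n with hμ
      have hMle : (⨆ i : Fin n, |x i - μ|) ≤ U - L := by
        apply Real.iSup_le _ (by linarith)
        intro i
        have hμL : L ≤ μ := by
          rw [hμ, le_div_iff₀ hnR]
          have := Finset.sum_le_sum (fun i (_ : i ∈ Finset.univ) => (hx i).1)
          simp at this; linarith [this]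
        have hμU : μ ≤ U := by
          rw [hμ, div_le_iff₀ hnR]
          have := Finset.sum_le_sum (fun i (_ : i ∈ Finset.univ) => (hx i).2)
          simp at this; linarith [this]
        exact abs_sub_le'' (hx i).1 (hx i).2 hμL hμU
      have h := key_bound hn L U hLU x y hx hy hd
      refine le_trans h ?_
      have hUL0 : (0:ℝ) ≤ U - L := by linarith
      calc (2 * (U - L) * (⨆ i : Fin n, |x i - μ|) + (U - L) ^ 2 * ((n : ℝ) - 1) / n) / n
          ≤ (2 * (U - L) * (U - L) + (U - L) ^ 2 * ((n : ℝ) - 1) / n) / n := by gcongr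
        _ = (U - L) ^ 2 * (3 * (n : ℝ) - 1) / (n : ℝ) ^ 2 := by
            field_simp; ring
    · exact div_nonneg (mul_nonneg (sq_nonneg _) (by linarith)) (by positivity)
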